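/- Let F : Y × E → E satisfy (F1)–(F3). Then the Nemytskii operator N : L^∞(Y,E) → L^∞(Y,E), (Nf)(y) = F(y, f(y)), is well defined, continuous, and maps bounded sets to bounded sets (with ‖Nf‖_∞ ≤ φ(‖f‖_∞)). -/

import Mathlib

open MeasureTheory

/-- Composition of a Carathéodory-type map with a simple function is strongly measurable. -/
lemma nemytskii_comp_simpleFunc {E Y : Type*} [NormedAddCommGroup E]
    [MeasurableSpace Y] (F : Y → E → E)
    (hF1 : ∀ z : E, StronglyMeasurable fun y => F y z)
    (s : SimpleFunc Y E) :
    StronglyMeasurable (fun y => F y (s y)) := by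
  classical
  have hrw : (fun y => F y (s y))
      = fun y => ∑ c ∈ s.range, Set.indicator (s ⁻¹' {c}) (fun y' => F y' c) y := by
    funext y
    have : ∀ c : E, Set.indicator (s ⁻¹' {c}) (fun y' => F y' c) y
        = if s y = c then F y c else 0 := by
      intro c
      by_cases h : s y = c <;> simp [Set.indicator_apply, h]
    simp_rw [this]
    rw [Finset.sum_ite_eq s.range (s y) (fun c => F y c)]
    simp [SimpleFunc.mem_range_self]
  rw [hrw]
  exact Finset.stronglyMeasurable_fun_sum _ fun c _ =>
    (hF1 c).indicator (s.measurableSet_fiber c)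

/-- Key uniformization of (F2) on balls, via compactness (finite dimension). -/
lemma nemytskii_key {E Y : Type*} [NormedAddCommGroup E] [NormedSpace ℝ E]
    [FiniteDimensional ℝ E] [MeasurableSpace Y] (μ : Measure Y)
    (F : Y → E → E)
    (hF2 : ∀ z : E, ∀ ε > (0 : ℝ), ∃ δ > (0 : ℝ), ∀ᵐ y ∂μ,
      ∀ w : E, ‖w - z‖ ≤ δ → ‖F y w - F y z‖ ≤ ε) :
    ∀ R : ℝ, ∀ ε > (0 : ℝ), ∃ δ > (0 : ℝ), ∀ᵐ y ∂μ,
      ∀ z w : E, ‖z‖ ≤ R → ‖w - z‖ ≤ δ → ‖F y w - F y z‖ ≤ ε := by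
  classical
  intro R ε hε
  have hε2 : (0:ℝ) < ε / 2 := by positivity
  choose d hd hae using fun z : E => hF2 z (ε/2) hε2
  -- finite subcover of the closed ball
  have hcover : Metric.closedBall (0:E) R ⊆ ⋃ z : E, Metric.ball z (d z / 2) := by
    intro x _
    exact Set.mem_iUnion.2 ⟨x, by simp [half_pos (hd x)]⟩
  obtain ⟨t, ht⟩ := (isCompact_closedBall (0:E) R).elim_finite_subcover
    (fun z : E => Metric.ball z (d z / 2)) (fun z => Metric.isOpen_ball) hcover
  set t' : Finset E := insert 0 t with ht'
  have h0t' : (0:E) ∈ t' := Finset.mem_insert_self _ _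
  set δ : ℝ := t'.inf' ⟨0, h0t'⟩ (fun z => d z / 2) with hδdef
  have hδpos : 0 < δ := by
    rw [hδdef]
    exact (Finset.lt_inf'_iff _).2 fun z _ => half_pos (hd z)
  refine ⟨δ, hδpos, ?_⟩
  have haeall : ∀ᵐ y ∂μ, ∀ z ∈ (t' : Set E),
      ∀ w : E, ‖w - z‖ ≤ d z → ‖F y w - F y z‖ ≤ ε/2 :=
    (ae_ball_iff t'.countable_toSet).2 fun z _ => hae z
  filter_upwards [haeall] with y hy z w hz hw
  have hzball : z ∈ Metric.closedBall (0:E) R := by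
    simpa [Metric.mem_closedBall, dist_eq_norm] using hz
  obtain ⟨z₀, hz₀t, hzz₀⟩ := Set.mem_iUnion₂.1 (ht hzball)
  have hz₀t' : z₀ ∈ (t' : Set E) := by
    simp [ht', Finset.mem_insert, hz₀t]
  have hδle : δ ≤ d z₀ / 2 := Finset.inf'_le _ (by simp [ht', hz₀t])
  have hzz₀' : ‖z - z₀‖ ≤ d z₀ / 2 := by
    have := Metric.mem_ball.1 hzz₀
    rw [dist_eq_norm] at this
    linarith
  have hwz₀ : ‖w - z₀‖ ≤ d z₀ := by
    calc ‖w - z₀‖ ≤ ‖w - z‖ + ‖z - z₀‖ := norm_sub_le_norm_sub_add_norm_sub _ _ _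
    _ ≤ δ + d z₀ / 2 := add_le_add hw hzz₀'
    _ ≤ d z₀ / 2 + d z₀ / 2 := by linarith
    _ = d z₀ := by ring
  have h1 : ‖F y w - F y z₀‖ ≤ ε/2 := hy z₀ hz₀t' w hwz₀
  have h2 : ‖F y z - F y z₀‖ ≤ ε/2 := hy z₀ hz₀t' z (hzz₀'.trans (by linarith [hd z₀]))
  calc ‖F y w - F y z‖ ≤ ‖F y w - F y z₀‖ + ‖F y z₀ - F y z‖ :=
        norm_sub_le_norm_sub_add_norm_sub _ _ _
  _ ≤ ε/2 + ε/2 := add_le_add h1 (by rwa [norm_sub_rev])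
  _ = ε := by ring

/-- Under (F1)–(F3), the Nemytskii operator `(Nf)(y) = F y (f y)` maps `L^∞(Y,E)`
into itself, maps bounded sets to bounded sets (`‖Nf‖_∞ ≤ φ(‖f‖_∞)`), and is
continuous. -/
theorem nemytskii_operator_wellDefined_bounded_continuous
    {E Y : Type*} [NormedAddCommGroup E] [NormedSpace ℝ E] [FiniteDimensional ℝ E]
    [MeasurableSpace Y] (μ : Measure Y)
    (F : Y → E → E)
    (hF1 : ∀ z : E, StronglyMeasurable fun y => F y z)
    (hF2 : ∀ z : E, ∀ ε > (0 : ℝ), ∃ δ > (0 : ℝ), ∀ᵐ y ∂μ,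
      ∀ w : E, ‖w - z‖ ≤ δ → ‖F y w - F y z‖ ≤ ε)
    (φ : ℝ → ℝ) (hφmono : Monotone φ) (hφcont : Continuous φ)
    (hF3 : ∀ᵐ y ∂μ, ∀ z : E, ‖F y z‖ ≤ φ ‖z‖) :
    -- well defined on L^∞
    (∀ f : Y → E, MemLp f ⊤ μ → MemLp (fun y => F y (f y)) ⊤ μ) ∧
    -- bounded sets to bounded sets, with ‖Nf‖_∞ ≤ φ(‖f‖_∞)
    (∀ f : Y → E, MemLp f ⊤ μ → ∀ M : ℝ, (∀ᵐ y ∂μ, ‖f y‖ ≤ M) →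
      ∀ᵐ y ∂μ, ‖F y (f y)‖ ≤ φ M) ∧
    -- continuity in the L^∞ sense
    (∀ f : Y → E, MemLp f ⊤ μ → ∀ ε > (0 : ℝ), ∃ δ > (0 : ℝ),
      ∀ f' : Y → E, MemLp f' ⊤ μ → (∀ᵐ y ∂μ, ‖f' y - f y‖ ≤ δ) →
        ∀ᵐ y ∂μ, ‖F y (f' y) - F y (f y)‖ ≤ ε) := by
  have key := nemytskii_key μ F hF2
  -- essential bound for a L^∞ function
  have bound : ∀ f : Y → E, MemLp f ⊤ μ → ∃ M : ℝ, ∀ᵐ y ∂μ, ‖f y‖ ≤ M := by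
    intro f hf
    refine ⟨(eLpNormEssSup f μ).toReal, ?_⟩
    have h1 : eLpNormEssSup f μ < ⊤ := by
      have := hf.2; rwa [eLpNorm_exponent_top] at this
    filter_upwards [ae_le_eLpNormEssSup (f := f) (μ := μ)] with y hy
    have : (‖f y‖₊ : ENNReal) ≤ eLpNormEssSup f μ := hy
    have h2 : (‖f y‖₊ : ENNReal).toReal ≤ (eLpNormEssSup f μ).toReal :=
      ENNReal.toReal_mono h1.ne this
    simpa using h2
  refine ⟨?_, ?_, ?_⟩
  · -- well defined
    intro f hf
    obtain ⟨M, hM⟩ := bound f hf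
    -- a strongly measurable representative
    have hfm := hf.1
    set g : Y → E := hfm.mk f with hg
    have hgsm : StronglyMeasurable g := hfm.stronglyMeasurable_mk
    have hfg : f =ᵐ[μ] g := hfm.ae_eq_mk
    have hgM : ∀ᵐ y ∂μ, ‖g y‖ ≤ M := by
      filter_upwards [hM, hfg] with y h1 h2
      rw [← h2]; exact h1
    -- the countable family of uniform-continuity sets
    choose δs hδs hδsae using fun k : ℕ => key M (1/(k+1)) (by positivity)
    have hδsall : ∀ᵐ y ∂μ, ∀ k : ℕ, ∀ z w : E, ‖z‖ ≤ M → ‖w - z‖ ≤ δs k →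
        ‖F y w - F y z‖ ≤ 1/(k+1) := ae_all_iff.2 hδsae
    -- the approximating sequence
    have hmeas : ∀ n : ℕ, AEStronglyMeasurable (fun y => F y (hgsm.approx n y)) μ :=
      fun n => (nemytskii_comp_simpleFunc F hF1 (hgsm.approx n)).aestronglyMeasurable
    have hlim : ∀ᵐ y ∂μ, Filter.Tendsto (fun n => F y (hgsm.approx n y))
        Filter.atTop (nhds (F y (g y))) := by
      filter_upwards [hgM, hδsall] with y hyM hyδ
      have htd : Filter.Tendsto (fun n => hgsm.approx n y) Filter.atTop (nhds (g y)) :=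
        hgsm.tendsto_approx y
      rw [NormedAddCommGroup.tendsto_atTop]
      intro ε hε
      obtain ⟨k, hk⟩ := exists_nat_one_div_lt hε
      have hev : ∀ᶠ n in Filter.atTop, ‖hgsm.approx n y - g y‖ ≤ δs k := by
        have := (NormedAddCommGroup.tendsto_atTop.1 htd) (δs k) (hδs k)
        obtain ⟨N, hN⟩ := this
        exact Filter.eventually_atTop.2 ⟨N, fun n hn => (hN n hn).le⟩
      obtain ⟨N, hN⟩ := Filter.eventually_atTop.1 hev
      refine ⟨N, fun n hn => ?_⟩
      have := hyδ k (g y) (hgsm.approx n y) hyM (hN n hn)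
      calc ‖F y (hgsm.approx n y) - F y (g y)‖ ≤ 1/(k+1) := this
      _ < ε := by exact_mod_cast hk
    have haesm : AEStronglyMeasurable (fun y => F y (g y)) μ :=
      aestronglyMeasurable_of_tendsto_ae Filter.atTop hmeas hlim
    have haesm' : AEStronglyMeasurable (fun y => F y (f y)) μ := by
      refine haesm.congr ?_
      filter_upwards [hfg] with y hy
      rw [hy]
    refine memLp_top_of_bound haesm' (φ M) ?_
    filter_upwards [hF3, hM] with y h1 h2
    exact (h1 (f y)).trans (hφmono h2)
  · -- bounded to bounded
    intro f _ M hM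
    filter_upwards [hF3, hM] with y h1 h2
    exact (h1 (f y)).trans (hφmono h2)
  · -- continuity
    intro f hf ε hε
    obtain ⟨M, hM⟩ := bound f hf
    obtain ⟨δ, hδpos, hδ⟩ := key M ε hε
    refine ⟨δ, hδpos, fun f' _ hf' => ?_⟩
    filter_upwards [hδ, hM, hf'] with y h1 h2 h3
    exact h1 (f y) (f' y) h2 h3
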